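/- Let V be a module over a field of characteristic zero and let ν_n : V^n → V (1 ≤ n ≤ N, ν_n symmetric multilinear, ν_n = 0 for n > N). Define MC(x) = ∑_{n≥1} (1/n!) ν_n(x,…,x) and the twisted operations ν^a_n = ∑_{k≥0} (1/k!) ν_{n+k}(a^{⊗k}, −). Then for all a, b ∈ V: MC_ν(a + b) = MC_ν(a) + MC_{ν^a}(b), where MC_{ν^a}(b) = ∑_{n≥1} (1/n!) ν^a_n(b,…,b). In particular, if a is a Maurer–Cartan element of ν, then b is a Maurer–Cartan element of the twisted structure ν^a if and only if a + b is a Maurer–Cartan element of ν. -/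

import Mathlib

/-- The twisted operation `ν^a_n(x₁,…,x_n) = ∑_{k≥0} (1/k!) ν_{n+k}(a,…,a,x₁,…,x_n)`.
Since `ν_n = 0` for `n > N`, the sum over `k ∈ {0,…,N}` captures all nonzero terms. -/
noncomputable def twistFun (K : Type*) [Field K] (V : Type*) [AddCommGroup V] [Module K V]
    (N : ℕ) (ν : (n : ℕ) → MultilinearMap K (fun _ : Fin n => V) V)
    (a : V) (n : ℕ) (x : Fin n → V) : V :=
  ∑ k ∈ Finset.range (N + 1),
    ((Nat.factorial k : K)⁻¹) • ν (k + n) (Fin.append (fun _ : Fin k => a) x)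

/-- The Maurer–Cartan map `MC(x) = ∑_{n≥1} (1/n!) ν_n(x,…,x)`. -/
noncomputable def MCmap (K : Type*) [Field K] (V : Type*) [AddCommGroup V] [Module K V]
    (N : ℕ) (ν : (n : ℕ) → MultilinearMap K (fun _ : Fin n => V) V) (x : V) : V :=
  ∑ n ∈ Finset.Icc 1 N, ((Nat.factorial n : K)⁻¹) • ν n (fun _ => x)

/-- There is a permutation carrying one finset of `Fin n` onto another of equal card. -/
private lemma exists_perm_finset {n : ℕ} (s t : Finset (Fin n)) (h : s.card = t.card) :
    ∃ σ : Equiv.Perm (Fin n), ∀ i, σ i ∈ s ↔ i ∈ t := by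
  have hc : tᶜ.card = sᶜ.card := by
    rw [Finset.card_compl, Finset.card_compl, h]
  let e1 : {x // x ∈ t} ≃ {x // x ∈ s} := Finset.equivOfCardEq h.symm
  let e2 : {x : Fin n // ¬ x ∈ t} ≃ {x : Fin n // ¬ x ∈ s} :=
    ((Equiv.subtypeEquivRight (fun x => (Finset.mem_compl (s := t) (a := x)).symm)).trans
      (Finset.equivOfCardEq hc)).trans
      (Equiv.subtypeEquivRight (fun x => Finset.mem_compl (s := s) (a := x)))
  refine ⟨((Equiv.sumCompl (· ∈ t)).symm.trans
      (Equiv.sumCongr e1 e2)).trans (Equiv.sumCompl (· ∈ s)), fun i => ?_⟩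
  by_cases hi : i ∈ t
  · simp only [Equiv.trans_apply, Equiv.sumCompl_symm_apply_of_pos hi,
      Equiv.sumCongr_apply, Sum.map_inl, Equiv.sumCompl_apply_inl]
    exact iff_of_true (e1 ⟨i, hi⟩).2 hi
  · simp only [Equiv.trans_apply, Equiv.sumCompl_symm_apply_of_neg hi,
      Equiv.sumCongr_apply, Sum.map_inr, Equiv.sumCompl_apply_inr]
    exact iff_of_false (e2 ⟨i, hi⟩).2 hi

private lemma card_filter_lt (n k : ℕ) (h : k ≤ n) :
    (Finset.univ.filter (fun i : Fin n => (i : ℕ) < k)).card = k := by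
  have heq : Finset.univ.filter (fun i : Fin n => (i : ℕ) < k)
      = Finset.univ.map ⟨Fin.castLE h, Fin.castLE_injective h⟩ := by
    ext i
    simp only [Finset.mem_filter, Finset.mem_univ, true_and, Finset.mem_map,
      Function.Embedding.coeFn_mk]
    constructor
    · intro hi; exact ⟨⟨i, hi⟩, Fin.ext rfl⟩
    · rintro ⟨j, rfl⟩; exact j.2
  rw [heq]; simp

private lemma append_const {V : Type*} (a b : V) (k m : ℕ) :
    Fin.append (fun _ : Fin k => a) (fun _ : Fin m => b)
      = fun i : Fin (k + m) => if (i : ℕ) < k then a else b := by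
  funext i
  by_cases h : (i : ℕ) < k
  · rw [show i = Fin.castAdd m ⟨(i : ℕ), h⟩ from Fin.ext rfl, Fin.append_left]
    simp [h]
  · have h2 : (i : ℕ) - k < m := by omega
    rw [show i = Fin.natAdd k ⟨(i : ℕ) - k, h2⟩ from Fin.ext (by simp; omega),
      Fin.append_right]
    simp

/-- `MC_ν(a + b) = MC_ν(a) + MC_{ν^a}(b)`; in particular, if `a` is a
Maurer–Cartan element of `ν`, then `b` is a Maurer–Cartan element of the twisted
structure `ν^a` iff `a + b` is a Maurer–Cartan element of `ν`. -/
theorem MC_twist (K : Type*) [Field K] [CharZero K]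
    (V : Type*) [AddCommGroup V] [Module K V]
    (N : ℕ) (hN : 0 < N)
    (ν : (n : ℕ) → MultilinearMap K (fun _ : Fin n => V) V)
    (hsym : ∀ (n : ℕ) (σ : Equiv.Perm (Fin n)) (x : Fin n → V), ν n (x ∘ σ) = ν n x)
    (hvan : ∀ n : ℕ, N < n → ν n = 0)
    (a b : V) :
    MCmap K V N ν (a + b)
        = MCmap K V N ν a
          + ∑ n ∈ Finset.Icc 1 N,
              ((Nat.factorial n : K)⁻¹) • twistFun K V N ν a n (fun _ => b) ∧
    (MCmap K V N ν a = 0 →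
      ((∑ n ∈ Finset.Icc 1 N,
          ((Nat.factorial n : K)⁻¹) • twistFun K V N ν a n (fun _ => b)) = 0
        ↔ MCmap K V N ν (a + b) = 0)) := by
  classical
  set g : ℕ → ℕ → V := fun n k => ν n (fun i : Fin n => if (i : ℕ) < k then a else b) with hg
  -- evaluation on indicator functions depends only on the cardinality
  have hind : ∀ (n : ℕ) (s : Finset (Fin n)),
      ν n (fun i => if i ∈ s then a else b) = g n s.card := by
    intro n s
    have hcard : s.card ≤ n := le_trans s.card_le_univ (by simp)
    obtain ⟨σ, hσ⟩ := exists_perm_finset s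
      (Finset.univ.filter fun i : Fin n => (i : ℕ) < s.card)
      (card_filter_lt n s.card hcard).symm
    have := hsym n σ (fun i => if i ∈ s then a else b)
    rw [← this]
    congr 1
    funext i
    simp only [Function.comp_apply]
    exact if_congr ((hσ i).trans (by simp)) rfl rfl
  -- binomial expansion
  have hexp : ∀ n : ℕ, ν n (fun _ : Fin n => a + b)
      = ∑ k ∈ Finset.range (n + 1), ((n.choose k : K)) • g n k := by
    intro n
    have h1 : (fun _ : Fin n => a + b) = (fun _ : Fin n => a) + (fun _ : Fin n => b) := rfl
    rw [h1, MultilinearMap.map_add_univ]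
    have h2 : ∀ s : Finset (Fin n),
        ν n (s.piecewise (fun _ => a) (fun _ => b)) = g n s.card := by
      intro s
      have hpc : s.piecewise (fun _ => a) (fun _ => b)
          = fun i => if i ∈ s then a else b := by
        funext i; simp [Finset.piecewise]
      rw [hpc, hind]
    calc (∑ s : Finset (Fin n), ν n (s.piecewise (fun _ => a) (fun _ => b)))
        = ∑ s ∈ (Finset.univ : Finset (Fin n)).powerset, g n s.card := by
          rw [Finset.powerset_univ]; exact Finset.sum_congr rfl fun s _ => h2 s
      _ = ∑ k ∈ Finset.range ((Finset.univ : Finset (Fin n)).card + 1),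
            ∑ s ∈ Finset.powersetCard k (Finset.univ : Finset (Fin n)), g n s.card :=
          Finset.sum_powerset _ _
      _ = ∑ k ∈ Finset.range (n + 1), ((n.choose k : K)) • g n k := by
          rw [show (Finset.univ : Finset (Fin n)).card = n by simp]
          refine Finset.sum_congr rfl fun k _ => ?_
          have : ∀ s ∈ Finset.powersetCard k (Finset.univ : Finset (Fin n)),
              g n s.card = g n k := by
            intro s hs
            rw [(Finset.mem_powersetCard.mp hs).2]
          rw [Finset.sum_congr rfl this, Finset.sum_const, Finset.card_powersetCard]
          simp [Nat.cast_smul_eq_nsmul]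
  -- the twisted sum equals a double sum of g's
  have hgn : ∀ n : ℕ, g n n = ν n (fun _ => a) := by
    intro n
    simp only [hg]
    congr 1
    funext i
    simp [i.2]
  have hTwist : (∑ n ∈ Finset.Icc 1 N,
        ((Nat.factorial n : K)⁻¹) • twistFun K V N ν a n (fun _ => b))
      = ∑ x ∈ (Finset.Icc 1 N).sigma (fun _ => Finset.range (N + 1)),
          (((Nat.factorial x.1 : K)⁻¹ * (Nat.factorial x.2 : K)⁻¹)) • g (x.2 + x.1) x.2 := by
    rw [Finset.sum_sigma]
    dsimp only
    refine Finset.sum_congr rfl fun m _ => ?_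
    rw [twistFun, Finset.smul_sum]
    refine Finset.sum_congr rfl fun k _ => ?_
    rw [append_const, smul_smul]
  -- kill the terms with x.2 + x.1 > N
  have hvanish : ∀ x : (_ : ℕ) × ℕ, N < x.2 + x.1 →
      (((Nat.factorial x.1 : K)⁻¹ * (Nat.factorial x.2 : K)⁻¹)) • g (x.2 + x.1) x.2 = 0 := by
    intro x hx
    simp [hg, hvan _ hx]
  -- main reindexing identity
  have key : (∑ n ∈ Finset.Icc 1 N, ((Nat.factorial n : K)⁻¹) •
        ∑ k ∈ Finset.range n, ((n.choose k : K)) • g n k)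
      = ∑ n ∈ Finset.Icc 1 N,
          ((Nat.factorial n : K)⁻¹) • twistFun K V N ν a n (fun _ => b) := by
    rw [hTwist]
    -- split the RHS index set according to whether x.2 + x.1 ≤ N
    rw [← Finset.sum_filter_add_sum_filter_not
      ((Finset.Icc 1 N).sigma (fun _ => Finset.range (N + 1)))
      (fun x => x.2 + x.1 ≤ N)]
    have hzero : (∑ x ∈ ((Finset.Icc 1 N).sigma (fun _ => Finset.range (N + 1))).filter
        (fun x => ¬ x.2 + x.1 ≤ N),
          (((Nat.factorial x.1 : K)⁻¹ * (Nat.factorial x.2 : K)⁻¹)) • g (x.2 + x.1) x.2) = 0 := by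
      refine Finset.sum_eq_zero fun x hx => ?_
      exact hvanish x (by have := (Finset.mem_filter.mp hx).2; omega)
    rw [hzero, add_zero]
    -- now a bijection (n,k) ↦ (n-k, k)
    have hLHS : (∑ n ∈ Finset.Icc 1 N, ((Nat.factorial n : K)⁻¹) •
          ∑ k ∈ Finset.range n, ((n.choose k : K)) • g n k)
        = ∑ x ∈ (Finset.Icc 1 N).sigma (fun n => Finset.range n),
            (((Nat.factorial x.1 : K)⁻¹ * (x.1.choose x.2 : K))) • g x.1 x.2 := by
      rw [Finset.sum_sigma]
      dsimp only
      refine Finset.sum_congr rfl fun n _ => ?_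
      rw [Finset.smul_sum]
      refine Finset.sum_congr rfl fun k _ => ?_
      rw [smul_smul]
    rw [hLHS]
    refine Finset.sum_nbij' (fun x => ⟨x.1 - x.2, x.2⟩) (fun x => ⟨x.2 + x.1, x.2⟩)
      ?_ ?_ ?_ ?_ ?_
    · rintro ⟨n, k⟩ hx
      simp only [Finset.mem_sigma, Finset.mem_Icc, Finset.mem_range] at hx
      simp only [Finset.mem_filter, Finset.mem_sigma, Finset.mem_Icc, Finset.mem_range]
      omega
    · rintro ⟨m, k⟩ hx
      simp only [Finset.mem_filter, Finset.mem_sigma, Finset.mem_Icc, Finset.mem_range] at hx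
      simp only [Finset.mem_sigma, Finset.mem_Icc, Finset.mem_range]
      omega
    · rintro ⟨n, k⟩ hx
      simp only [Finset.mem_sigma, Finset.mem_Icc, Finset.mem_range] at hx
      have : k + (n - k) = n := by omega
      simp only
      rw [this]
    · rintro ⟨m, k⟩ hx
      simp only [Finset.mem_filter, Finset.mem_sigma, Finset.mem_Icc, Finset.mem_range] at hx
      have : k + m - k = m := by omega
      simp only
      rw [this]
    · rintro ⟨n, k⟩ hx
      simp only [Finset.mem_sigma, Finset.mem_Icc, Finset.mem_range] at hx
      have hk : k ≤ n := le_of_lt hx.2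
      have hn : k + (n - k) = n := by omega
      simp only
      rw [hn]
      congr 1
      -- coefficient identity
      have hfac : (n.choose k : K) * (k.factorial : K) * ((n - k).factorial : K)
          = (n.factorial : K) := by
        exact_mod_cast congrArg (Nat.cast : ℕ → K) (Nat.choose_mul_factorial_mul_factorial hk)
      have h1 : (k.factorial : K) ≠ 0 := Nat.cast_ne_zero.mpr (Nat.factorial_ne_zero k)
      have h2 : ((n - k).factorial : K) ≠ 0 := Nat.cast_ne_zero.mpr (Nat.factorial_ne_zero _)
      have h3 : (n.factorial : K) ≠ 0 := Nat.cast_ne_zero.mpr (Nat.factorial_ne_zero n)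
      rw [inv_mul_eq_div, div_eq_iff h3, ← hfac]
      field_simp
  -- put everything together
  have main : MCmap K V N ν (a + b)
      = MCmap K V N ν a
        + ∑ n ∈ Finset.Icc 1 N,
            ((Nat.factorial n : K)⁻¹) • twistFun K V N ν a n (fun _ => b) := by
    rw [MCmap]
    have : (∑ n ∈ Finset.Icc 1 N, ((Nat.factorial n : K)⁻¹) • ν n (fun _ => a + b))
        = ∑ n ∈ Finset.Icc 1 N, (((Nat.factorial n : K)⁻¹) • ν n (fun _ => a)
            + ((Nat.factorial n : K)⁻¹) •
              ∑ k ∈ Finset.range n, ((n.choose k : K)) • g n k) := by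
      refine Finset.sum_congr rfl fun n _ => ?_
      rw [hexp n, Finset.sum_range_succ, smul_add, Nat.choose_self, hgn n]
      rw [add_comm]
      congr 1
      simp
    rw [this, Finset.sum_add_distrib, key, MCmap]
  refine ⟨main, fun h0 => ?_⟩
  rw [main, h0, zero_add]
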